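/- Every graph in which every cycle has odd length is a cactus; that is, any two distinct cycles of such a graph share at most one common vertex. -/

import Mathlib

open SimpleGraph Finset

open scoped Classical in
/-- The adjacency matrix of a graph over `ℝ` (using classical decidability). -/
noncomputable def adjMat {V : Type*} [Fintype V] [DecidableEq V] (G : SimpleGraph V) :
    Matrix V V ℝ :=
  fun a b => if G.Adj a b then 1 else 0

theorem adjMat_isHermitian {V : Type*} [Fintype V] [DecidableEq V] (G : SimpleGraph V) :
    (adjMat G).IsHermitian := by
  ext a b
  rw [Matrix.conjTranspose_apply]
  by_cases h : G.Adj a b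
  · simp [adjMat, h, h.symm]
  · simp [adjMat, h, mt (fun h' : G.Adj b a => h'.symm) h]

/-- The spectral radius (specRad) (largest adjacency eigenvalue) of a graph. -/
noncomputable def specRad {V : Type*} [Fintype V] [DecidableEq V]
    (G : SimpleGraph V) : ℝ :=
  ⨆ a : V, (adjMat_isHermitian G).eigenvalues a

/-- A cactus: any two distinct cycles (distinct as edge sets) share at most one vertex. -/
def IsCactus {V : Type*} [DecidableEq V] (G : SimpleGraph V) : Prop :=
  ∀ ⦃u v : V⦄ (c₁ : G.Walk u u) (c₂ : G.Walk v v), c₁.IsCycle → c₂.IsCycle →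
    c₁.edges.toFinset ≠ c₂.edges.toFinset →
      (c₁.support.toFinset ∩ c₂.support.toFinset).card ≤ 1

/-- A unicyclic graph: connected with exactly one cycle (one cycle edge set). -/
def Unicyclic {V : Type*} [DecidableEq V] (G : SimpleGraph V) : Prop :=
  G.Connected ∧ ∃! E : Finset (Sym2 V), ∃ (w : V) (c : G.Walk w w),
    c.IsCycle ∧ c.edges.toFinset = E

/-- The star `K_{1,n-1}` on `Fin n` with center `0`. -/
def starGraph (n : ℕ) : SimpleGraph (Fin n) where
  Adj a b := a ≠ b ∧ ((a : ℕ) = 0 ∨ (b : ℕ) = 0)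
  symm := by
    constructor
    intro a b h
    try dsimp only at h ⊢
    tauto
  loopless := by
    constructor
    intro a h
    try dsimp only at h ⊢
    tauto

/-- `K_{1,n-1}^+`: the star plus one edge between the leaves `1` and `2`. -/
def starPlus (n : ℕ) : SimpleGraph (Fin n) where
  Adj a b := a ≠ b ∧ ((a : ℕ) = 0 ∨ (b : ℕ) = 0 ∨ ((a : ℕ) ≤ 2 ∧ (b : ℕ) ≤ 2))
  symm := by
    constructor
    intro a b h
    try dsimp only at h ⊢
    tauto
  loopless := by
    constructor
    intro a h
    try dsimp only at h ⊢
    tauto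

/-- `H_n`: the star `K_{1,n-1}` plus `⌊(n-1)/2⌋` independent edges `(1,2), (3,4), …`
between pairs of leaves. -/
def Hgraph (n : ℕ) : SimpleGraph (Fin n) where
  Adj a b := a ≠ b ∧ ((a : ℕ) = 0 ∨ (b : ℕ) = 0 ∨
    ((a : ℕ) % 2 = 1 ∧ (b : ℕ) = a + 1) ∨ ((b : ℕ) % 2 = 1 ∧ (a : ℕ) = b + 1))
  symm := by
    constructor
    intro a b h
    try dsimp only at h ⊢
    tauto
  loopless := by
    constructor
    intro a h
    try dsimp only at h ⊢
    tauto

/-- Rewiring: delete the edges `v w` and add the edges `u w` for `w ∈ S`. -/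
def rewire {V : Type*} (G : SimpleGraph V) (u v : V) (S : Set V) : SimpleGraph V :=
  SimpleGraph.fromEdgeSet ((G.edgeSet \ {e | ∃ w ∈ S, e = s(v, w)}) ∪ {e | ∃ w ∈ S, e = s(u, w)})

/-- An edge lies in a triangle of `G`. -/
def InTriangle {V : Type*} (G : SimpleGraph V) (e : Sym2 V) : Prop :=
  ∃ a b c : V, G.Adj a b ∧ G.Adj b c ∧ G.Adj a c ∧
    (e = s(a, b) ∨ e = s(b, c) ∨ e = s(a, c))

namespace OddCactus

variable {V : Type*} {G : SimpleGraph V}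

/-- A path from `a` to `b` containing the edge `s(a,b)` has length 1. -/
lemma length_eq_one_of_edge_mem {a b : V} {p : G.Walk a b} (hp : p.IsPath)
    (h : s(a, b) ∈ p.edges) : p.length = 1 := by
  cases p with
  | nil => simp at h
  | @cons _ c _ hadj q =>
    rw [SimpleGraph.Walk.edges_cons, List.mem_cons] at h
    rcases h with h | h
    · rw [Sym2.eq_iff] at h
      rcases h with ⟨-, rfl⟩ | ⟨rfl, rfl⟩
      · have hq : q.IsPath := hp.of_cons
        rw [SimpleGraph.Walk.isPath_iff_eq_nil] at hq
        subst hq; simp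
      · exact absurd rfl hadj.ne
    · have := SimpleGraph.Walk.fst_mem_support_of_mem_edges q h
      rw [SimpleGraph.Walk.cons_isPath_iff] at hp
      exact absurd this hp.2

/-- Two internally disjoint distinct paths between distinct vertices form a cycle. -/
lemma isCycle_append_reverse {a b : V} {P Q : G.Walk a b} (hP : P.IsPath) (hQ : Q.IsPath)
    (hab : a ≠ b) (hdisj : ∀ z, z ∈ P.support → z ∈ Q.support → z = a ∨ z = b)
    (hne : P.edges ≠ Q.edges) : (P.append Q.reverse).IsCycle := by
  have hedis : ∀ e, e ∈ P.edges → e ∈ Q.edges → False := by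
    intro e heP heQ
    induction e using Sym2.ind with
    | _ x y =>
      have hxy : x ≠ y := (P.adj_of_mem_edges heP).ne
      have hxP := SimpleGraph.Walk.fst_mem_support_of_mem_edges P heP
      have hyP := SimpleGraph.Walk.snd_mem_support_of_mem_edges P heP
      have hxQ := SimpleGraph.Walk.fst_mem_support_of_mem_edges Q heQ
      have hyQ := SimpleGraph.Walk.snd_mem_support_of_mem_edges Q heQ
      have hx := hdisj x hxP hxQ
      have hy := hdisj y hyP hyQ
      have hxyab : s(x, y) = s(a, b) := by
        rcases hx with rfl | rfl <;> rcases hy with rfl | rfl <;> first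
          | exact absurd rfl hxy | exact absurd rfl hab | rw [Sym2.eq_swap]
      rw [hxyab] at heP heQ
      have h1 := length_eq_one_of_edge_mem hP heP
      have h2 := length_eq_one_of_edge_mem hQ heQ
      apply hne
      obtain ⟨eP, hEP⟩ := List.length_eq_one_iff.mp (by rw [SimpleGraph.Walk.length_edges, h1])
      obtain ⟨eQ, hEQ⟩ := List.length_eq_one_iff.mp (by rw [SimpleGraph.Walk.length_edges, h2])
      rw [hEP, hEQ]
      rw [hEP, List.mem_singleton] at heP
      rw [hEQ, List.mem_singleton] at heQ
      rw [← heP, ← heQ]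
  rw [SimpleGraph.Walk.isCycle_def]
  refine ⟨?_, ?_, ?_⟩
  · rw [SimpleGraph.Walk.isTrail_def, SimpleGraph.Walk.edges_append,
      SimpleGraph.Walk.edges_reverse, List.nodup_append]
    refine ⟨hP.isTrail.edges_nodup, (List.nodup_reverse).mpr hQ.isTrail.edges_nodup, ?_⟩
    intro e heP f heQ hef
    subst hef
    exact hedis e heP (List.mem_reverse.mp heQ)
  · intro hnil
    have : P.length + Q.length = 0 := by
      have := congrArg SimpleGraph.Walk.length hnil
      simpa [SimpleGraph.Walk.length_append] using this
    have : P.length = 0 := by omega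
    exact hab (SimpleGraph.Walk.eq_of_length_eq_zero this ▸ rfl)
  · rw [SimpleGraph.Walk.tail_support_append, List.nodup_append]
    refine ⟨hP.support_nodup.tail, hQ.reverse.support_nodup.tail, ?_⟩
    intro z hzP w hzQ hzw
    subst hzw
    have hzP' : z ∈ P.support := List.mem_of_mem_tail hzP
    have hzQ' : z ∈ Q.support := by
      have := List.mem_of_mem_tail hzQ
      rwa [SimpleGraph.Walk.support_reverse, List.mem_reverse] at this
    rcases hdisj z hzP' hzQ' with rfl | rfl
    · have := hP.support_nodup
      rw [P.support_eq_cons] at this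
      exact (List.nodup_cons.mp this).1 hzP
    · have := hQ.reverse.support_nodup
      rw [Q.reverse.support_eq_cons] at this
      exact (List.nodup_cons.mp this).1 hzQ

variable [DecidableEq V]

/-- Splitting a cycle at a vertex distinct from its base. -/
lemma split_cycle {x : V} {C : G.Walk x x} (hC : C.IsCycle) {y : V} (hy : y ∈ C.support)
    (hyx : y ≠ x) :
    ∃ (P Q : G.Walk x y), P.IsPath ∧ Q.IsPath ∧ P.length + Q.length = C.length ∧
      (∀ z, z ∈ P.support → z ∈ Q.support → z = x ∨ z = y) ∧
      (∀ z, z ∈ P.support → z ∈ C.support) ∧ (∀ z, z ∈ Q.support → z ∈ C.support) ∧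
      (∀ e, e ∈ P.edges → e ∈ C.edges) ∧ (∀ e, e ∈ Q.edges → e ∈ C.edges) ∧
      (∀ e, e ∈ C.edges → e ∈ P.edges ∨ e ∈ Q.edges) := by
  cases C with
  | nil => exact absurd rfl hC.ne_nil
  | @cons _ w _ hadj q =>
    obtain ⟨hq, hxw⟩ := (SimpleGraph.Walk.cons_isCycle_iff q hadj).mp hC
    have hyq : y ∈ q.support := by
      rw [SimpleGraph.Walk.support_cons, List.mem_cons] at hy
      exact hy.resolve_left hyx
    set q1 := q.takeUntil y hyq with hq1def
    set q2 := q.dropUntil y hyq with hq2def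
    have hspec : q1.append q2 = q := q.take_spec hyq
    have hq1 : q1.IsPath := hq.takeUntil hyq
    have hq2 : q2.IsPath := hq.dropUntil hyq
    have hsupp : q.support = q1.support ++ q2.support.tail := by
      rw [← hspec, SimpleGraph.Walk.support_append]
    have hqnodup : (q1.support ++ q2.support.tail).Nodup := by
      rw [← hsupp]; exact hq.support_nodup
    have hdisjsupp : ∀ z, z ∈ q1.support → z ∈ q2.support.tail → False := fun z h1 h2 =>
      (List.disjoint_of_nodup_append hqnodup) h1 h2
    have hxq1 : x ∉ q1.support := by
      intro hx
      refine hdisjsupp x hx ?_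
      have hxq2 : x ∈ q2.support := SimpleGraph.Walk.end_mem_support q2
      rw [q2.support_eq_cons, List.mem_cons] at hxq2
      exact hxq2.resolve_left (Ne.symm hyx)
    refine ⟨SimpleGraph.Walk.cons hadj q1, q2.reverse, ?_, hq2.reverse, ?_, ?_, ?_, ?_, ?_, ?_, ?_⟩
    · exact hq1.cons hxq1
    · have hlen : q1.length + q2.length = q.length := by
        rw [← hspec, SimpleGraph.Walk.length_append]
      simp only [SimpleGraph.Walk.length_cons, SimpleGraph.Walk.length_reverse]
      omega
    · intro z hz1 hz2
      rw [SimpleGraph.Walk.support_cons, List.mem_cons] at hz1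
      rcases hz1 with rfl | hz1
      · exact Or.inl rfl
      rw [SimpleGraph.Walk.support_reverse, List.mem_reverse] at hz2
      rw [q2.support_eq_cons, List.mem_cons] at hz2
      rcases hz2 with rfl | hz2
      · exact Or.inr rfl
      · exact absurd hz2 (fun h => hdisjsupp z hz1 h)
    · intro z hz
      rw [SimpleGraph.Walk.support_cons, List.mem_cons] at hz
      rw [SimpleGraph.Walk.support_cons, List.mem_cons]
      exact hz.imp id (fun h => q.support_takeUntil_subset hyq h)
    · intro z hz
      rw [SimpleGraph.Walk.support_reverse, List.mem_reverse] at hz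
      rw [SimpleGraph.Walk.support_cons, List.mem_cons]
      exact Or.inr (q.support_dropUntil_subset hyq hz)
    · intro e he
      rw [SimpleGraph.Walk.edges_cons, List.mem_cons] at he ⊢
      exact he.imp id (fun h => q.edges_takeUntil_subset hyq h)
    · intro e he
      rw [SimpleGraph.Walk.edges_reverse, List.mem_reverse] at he
      rw [SimpleGraph.Walk.edges_cons, List.mem_cons]
      exact Or.inr (q.edges_dropUntil_subset hyq he)
    · intro e he
      rw [SimpleGraph.Walk.edges_cons, List.mem_cons] at he
      rcases he with rfl | he
      · exact Or.inl (by simp)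
      · have : e ∈ q1.edges ++ q2.edges := by
          rw [← SimpleGraph.Walk.edges_append, hspec]; exact he
        rw [List.mem_append] at this
        rcases this with h | h
        · exact Or.inl (by rw [SimpleGraph.Walk.edges_cons]; exact List.mem_cons_of_mem _ h)
        · exact Or.inr (by rw [SimpleGraph.Walk.edges_reverse, List.mem_reverse]; exact h)


lemma mem_support_rotate {u v : V} (c : G.Walk v v) (h : u ∈ c.support) (z : V) :
    z ∈ (c.rotate u h).support ↔ z ∈ c.support := by
  rw [SimpleGraph.Walk.rotate, SimpleGraph.Walk.mem_support_append_iff]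
  conv_rhs => rw [← c.take_spec h]
  rw [SimpleGraph.Walk.mem_support_append_iff]
  tauto

lemma no_ear (hodd : ∀ (u : V) (c : G.Walk u u), c.IsCycle → Odd c.length)
    {u : V} {C : G.Walk u u} (hC : C.IsCycle) {p q : V} (E : G.Walk p q) (hE : E.IsPath)
    (hpq : p ≠ q) (hp : p ∈ C.support) (hq : q ∈ C.support)
    (hint : ∀ z, z ∈ E.support → z ∈ C.support → z = p ∨ z = q)
    (hedge : ∃ e ∈ E.edges, e ∉ C.edges) : False := by
  set C' := C.rotate p hp with hC'def
  have hC' : C'.IsCycle := hC.rotate hp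
  have hmem : ∀ z, z ∈ C'.support ↔ z ∈ C.support := mem_support_rotate C hp
  have hedges : ∀ e, e ∈ C'.edges ↔ e ∈ C.edges := fun e => (C.rotate_edges p hp).mem_iff
  have hq' : q ∈ C'.support := (hmem q).mpr hq
  obtain ⟨D1, D2, hD1, hD2, hlen, hdisj, hs1, hs2, he1, he2, -⟩ :=
    split_cycle hC' hq' (Ne.symm hpq)
  obtain ⟨e, heE, heC⟩ := hedge
  have key : ∀ (D : G.Walk p q), D.IsPath → (∀ z, z ∈ D.support → z ∈ C'.support) →
      (∀ e, e ∈ D.edges → e ∈ C'.edges) → Odd (D.length + E.length) := by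
    intro D hD hsD heD
    have hcyc : (D.append E.reverse).IsCycle := by
      apply isCycle_append_reverse hD hE hpq
      · intro z hz1 hz2
        exact hint z hz2 ((hmem z).mp (hsD z hz1))
      · intro hEq
        exact heC ((hedges e).mp (heD e (hEq ▸ heE)))
    have := hodd p _ hcyc
    rwa [SimpleGraph.Walk.length_append, SimpleGraph.Walk.length_reverse] at this
  have h1 := key D1 hD1 hs1 he1
  have h2 := key D2 hD2 hs2 he2
  have h3 : Odd C'.length := hodd p C' hC'
  rw [← hlen] at h3
  obtain ⟨a1, ha1⟩ := h1; obtain ⟨a2, ha2⟩ := h2; obtain ⟨a3, ha3⟩ := h3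
  omega

lemma exit_segment {u : V} (C : G.Walk u u) {c q : V} (W : G.Walk c q) :
    c ∉ C.support → q ∈ C.support →
    ∃ r, r ∈ C.support ∧ ∃ (W1 : G.Walk c r) (W2 : G.Walk r q),
      W = W1.append W2 ∧ ∀ z, z ∈ W1.support → z ∈ C.support → z = r := by
  induction W with
  | nil => intro hc hq; exact absurd hq hc
  | @cons a d b h W' ih =>
    intro hc hq
    by_cases hd : d ∈ C.support
    · refine ⟨d, hd, SimpleGraph.Walk.cons h SimpleGraph.Walk.nil, W', by simp, ?_⟩
      intro z hz hzC
      simp only [SimpleGraph.Walk.support_cons, SimpleGraph.Walk.support_nil,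
        List.mem_cons, List.mem_singleton] at hz
      rcases hz with rfl | hz
      · exact absurd hzC hc
      · simpa using hz
    · obtain ⟨r, hr, W1, W2, hWeq, hW1⟩ := ih hd hq
      refine ⟨r, hr, SimpleGraph.Walk.cons h W1, W2,
        by rw [SimpleGraph.Walk.cons_append, hWeq], ?_⟩
      intro z hz hzC
      rw [SimpleGraph.Walk.support_cons, List.mem_cons] at hz
      rcases hz with rfl | hz
      · exact absurd hzC hc
      · exact hW1 z hz hzC

lemma no_escape (hodd : ∀ (u : V) (c : G.Walk u u), c.IsCycle → Odd c.length)
    {u : V} {C : G.Walk u u} (hC : C.IsCycle) {p q : V} (W : G.Walk p q) :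
    W.IsPath → p ∈ C.support → q ∈ C.support →
    (∃ e ∈ W.edges, e ∉ C.edges) → False := by
  induction W with
  | nil =>
    rintro - - - ⟨e, he, -⟩
    simp at he
  | @cons a c b h W' ih =>
    intro hW hp hq hedge
    by_cases hcS : c ∈ C.support
    · by_cases hce : s(a, c) ∈ C.edges
      · obtain ⟨e, he, heC⟩ := hedge
        rw [SimpleGraph.Walk.edges_cons, List.mem_cons] at he
        rcases he with rfl | he
        · exact heC hce
        · exact ih hW.of_cons hcS hq ⟨e, he, heC⟩
      · refine no_ear hodd hC (SimpleGraph.Walk.cons h SimpleGraph.Walk.nil)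
          ?_ h.ne hp hcS ?_ ⟨s(a, c), by simp, hce⟩
        · rw [SimpleGraph.Walk.cons_isPath_iff]
          refine ⟨SimpleGraph.Walk.IsPath.nil, ?_⟩
          simp [h.ne]
        · intro z hz _
          simp only [SimpleGraph.Walk.support_cons, SimpleGraph.Walk.support_nil,
            List.mem_cons, List.mem_singleton] at hz
          rcases hz with rfl | hz
          · exact Or.inl rfl
          · exact Or.inr (by simpa using hz)
    · obtain ⟨r, hr, W1, W2, hWeq, hW1⟩ := exit_segment C W' hcS hq
      have hpath : (SimpleGraph.Walk.cons h W1).IsPath := by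
        have hw : (SimpleGraph.Walk.cons h (W1.append W2)).IsPath := hWeq ▸ hW
        rw [← SimpleGraph.Walk.cons_append] at hw
        exact hw.of_append_left
      have hprW : a ≠ r := by
        intro hpr
        rw [SimpleGraph.Walk.cons_isPath_iff] at hW
        apply hW.2
        rw [hWeq, SimpleGraph.Walk.mem_support_append_iff]
        exact Or.inl (hpr ▸ SimpleGraph.Walk.end_mem_support W1)
      have hfe : s(a, c) ∉ C.edges := fun hce =>
        hcS (SimpleGraph.Walk.snd_mem_support_of_mem_edges C hce)
      refine no_ear hodd hC (SimpleGraph.Walk.cons h W1) hpath hprW hp hr ?_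
        ⟨s(a, c), by simp, hfe⟩
      intro z hz hzC
      rw [SimpleGraph.Walk.support_cons, List.mem_cons] at hz
      rcases hz with rfl | hz
      · exact Or.inl rfl
      · exact Or.inr (hW1 z hz hzC)

lemma main_asym (hodd : ∀ (u : V) (c : G.Walk u u), c.IsCycle → Odd c.length)
    {u v : V} (c₁ : G.Walk u u) (c₂ : G.Walk v v) (h₁ : c₁.IsCycle) (h₂ : c₂.IsCycle)
    (he : ∃ e ∈ c₂.edges, e ∉ c₁.edges) {x y : V}
    (hx1 : x ∈ c₁.support) (hx2 : x ∈ c₂.support) (hy1 : y ∈ c₁.support)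
    (hy2 : y ∈ c₂.support) (hxy : x ≠ y) : False := by
  have h₂' : (c₂.rotate x hx2).IsCycle := h₂.rotate hx2
  have hy2' : y ∈ (c₂.rotate x hx2).support := (mem_support_rotate c₂ hx2 y).mpr hy2
  obtain ⟨B1, B2, hB1, hB2, -, -, -, -, -, -, hcov⟩ := split_cycle h₂' hy2' hxy.symm
  obtain ⟨e, he2, he1⟩ := he
  have he2' : e ∈ (c₂.rotate x hx2).edges := (c₂.rotate_edges x hx2).mem_iff.mpr he2
  rcases hcov e he2' with hh | hh
  · exact no_escape hodd h₁ B1 hB1 hx1 hy1 ⟨e, hh, he1⟩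
  · exact no_escape hodd h₁ B2 hB2 hx1 hy1 ⟨e, hh, he1⟩

end OddCactus

theorem odd_cycle_graph_is_cactus {V : Type*} [Fintype V] [DecidableEq V]
    (G : SimpleGraph V)
    (hodd : ∀ (u : V) (c : G.Walk u u), c.IsCycle → Odd c.length) :
    IsCactus G := by
  intro u v c₁ c₂ h₁ h₂ hne
  by_contra hcard
  push_neg at hcard
  obtain ⟨x, hx, y, hy, hxy⟩ := Finset.one_lt_card.mp hcard
  rw [Finset.mem_inter, List.mem_toFinset, List.mem_toFinset] at hx hy
  have hediff : ∃ e, ¬(e ∈ c₁.edges ↔ e ∈ c₂.edges) := by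
    by_contra hall
    push_neg at hall
    apply hne
    ext e
    rw [List.mem_toFinset, List.mem_toFinset]
    exact hall e
  obtain ⟨e, hiff⟩ := hediff
  by_cases h1 : e ∈ c₁.edges <;> by_cases h2 : e ∈ c₂.edges
  · exact hiff (iff_of_true h1 h2)
  · exact OddCactus.main_asym hodd c₂ c₁ h₂ h₁ ⟨e, h1, h2⟩ hx.2 hx.1 hy.2 hy.1 hxy
  · exact OddCactus.main_asym hodd c₁ c₂ h₁ h₂ ⟨e, h2, h1⟩ hx.1 hx.2 hy.1 hy.2 hxy
  · exact hiff (iff_of_false h1 h2)
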